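/- If f is holomorphic on the open unit disk 𝔻 with f'(z) ≠ 0 for all z ∈ 𝔻, and its Schwarzian derivative satisfies (1 − |z|²)² |S_f(z)| ≤ 2 for every z ∈ 𝔻, then f is injective on 𝔻. (This is Nehari's univalence criterion, the fact used in the paper that the universal Teichmüller space contains the ball of radius 2 of the space B.) -/

import Mathlib

open Metric Set Complex

/-- The Schwarzian derivative `S_f = (f''/f')' - (1/2)(f''/f')²`. -/
noncomputable def schwarzian (f : ℂ → ℂ) : ℂ → ℂ := fun z =>
  deriv (fun w => deriv (deriv f) w / deriv f w) z -
    (deriv (deriv f) z / deriv f z) ^ 2 / 2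

namespace NehariAux

lemma memb {t : ℝ} (h : |t| < 1) : (t : ℂ) ∈ ball (0:ℂ) 1 := by
  simpa [Complex.norm_real] using h

noncomputable def P (g : ℂ → ℂ) (z : ℂ) : ℂ := deriv (deriv g) z / deriv g z

noncomputable def L (g : ℂ → ℂ) (t : ℝ) : ℂ := ∫ s in (0:ℝ)..t, P g s

noncomputable def E (g : ℂ → ℂ) (t : ℝ) : ℂ := Complex.exp (-(L g t) / 2)

noncomputable def u (g : ℂ → ℂ) (c : ℂ) (t : ℝ) : ℂ := (g t - c) * E g t

noncomputable def u1 (g : ℂ → ℂ) (c : ℂ) (t : ℝ) : ℂ :=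
  (deriv g t - (g t - c) * P g t / 2) * E g t

variable {g : ℂ → ℂ}

lemma P_diff (hg : DifferentiableOn ℂ g (ball (0:ℂ) 1))
    (hg' : ∀ z ∈ ball (0:ℂ) 1, deriv g z ≠ 0) {z : ℂ} (hz : z ∈ ball (0:ℂ) 1) :
    DifferentiableAt ℂ (P g) z := by
  have hA : AnalyticOnNhd ℂ g (ball (0:ℂ) 1) := hg.analyticOnNhd isOpen_ball
  exact ((hA.deriv.deriv z hz).differentiableAt).div
    ((hA.deriv z hz).differentiableAt) (hg' z hz)

lemma deriv_P (hg : DifferentiableOn ℂ g (ball (0:ℂ) 1)) {z : ℂ} :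
    deriv (P g) z = schwarzian g z + (P g z) ^ 2 / 2 := by
  have : schwarzian g z = deriv (P g) z - (P g z) ^ 2 / 2 := rfl
  rw [this]; ring

lemma hasDerivAt_P (hg : DifferentiableOn ℂ g (ball (0:ℂ) 1))
    (hg' : ∀ z ∈ ball (0:ℂ) 1, deriv g z ≠ 0) {z : ℂ} (hz : z ∈ ball (0:ℂ) 1) :
    HasDerivAt (P g) (schwarzian g z + (P g z) ^ 2 / 2) z := by
  have := (P_diff hg hg' hz).hasDerivAt
  rwa [deriv_P hg] at this

lemma contAt_P (hg : DifferentiableOn ℂ g (ball (0:ℂ) 1))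
    (hg' : ∀ z ∈ ball (0:ℂ) 1, deriv g z ≠ 0) {t : ℝ} (ht : t ∈ Ioo (-1:ℝ) 1) :
    ContinuousAt (fun s : ℝ => P g s) t := by
  have h1 : |t| < 1 := abs_lt.2 ⟨ht.1, ht.2⟩
  exact (P_diff hg hg' (memb h1)).continuousAt.comp Complex.continuous_ofReal.continuousAt

lemma hasDerivAt_L (hg : DifferentiableOn ℂ g (ball (0:ℂ) 1))
    (hg' : ∀ z ∈ ball (0:ℂ) 1, deriv g z ≠ 0) {t : ℝ} (ht : t ∈ Ioo (-1:ℝ) 1) :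
    HasDerivAt (L g) (P g t) t := by
  have hsub : uIcc (0:ℝ) t ⊆ Ioo (-1:ℝ) 1 := by
    have h0 : (0:ℝ) ∈ Ioo (-1:ℝ) 1 := by constructor <;> norm_num
    intro s hs
    rcases Set.mem_uIcc.1 hs with h | h
    · exact ⟨lt_of_lt_of_le h0.1 h.1, lt_of_le_of_lt h.2 ht.2⟩
    · exact ⟨lt_of_lt_of_le ht.1 h.1, lt_of_le_of_lt h.2 h0.2⟩
  have hco : ContinuousOn (fun s : ℝ => P g s) (Ioo (-1:ℝ) 1) := fun s hs =>
    (contAt_P hg hg' hs).continuousWithinAt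
  apply intervalIntegral.integral_hasDerivAt_right
  · exact (hco.mono hsub).intervalIntegrable
  · exact hco.stronglyMeasurableAtFilter isOpen_Ioo t ht
  · exact contAt_P hg hg' ht



lemma creal {F : ℝ → ℂ} {F' : ℂ} {t : ℝ} (h : HasDerivAt F F' t) :
    HasDerivAt (fun s => (F s).re) F'.re t := by
  have h' := Complex.reCLM.hasFDerivAt.comp_hasDerivAt t h
  simp only [Function.comp_def, Complex.reCLM_apply] at h'
  exact h'

lemma cimag {F : ℝ → ℂ} {F' : ℂ} {t : ℝ} (h : HasDerivAt F F' t) :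
    HasDerivAt (fun s => (F s).im) F'.im t := by
  have h' := Complex.imCLM.hasFDerivAt.comp_hasDerivAt t h
  simp only [Function.comp_def, Complex.imCLM_apply] at h'
  exact h'




variable {g : ℂ → ℂ} {c : ℂ}


lemma abs_lt_of_Ioo {t : ℝ} (ht : t ∈ Ioo (-1:ℝ) 1) : |t| < 1 := abs_lt.2 ⟨ht.1, ht.2⟩

lemma hasDerivAt_gc (hg : DifferentiableOn ℂ g (ball (0:ℂ) 1)) {t : ℝ}
    (ht : t ∈ Ioo (-1:ℝ) 1) :
    HasDerivAt (fun s : ℝ => g s) (deriv g t) t := by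
  have hz := memb (abs_lt_of_Ioo ht)
  exact ((hg.differentiableAt (isOpen_ball.mem_nhds hz)).hasDerivAt).comp_ofReal

lemma hasDerivAt_F1c (hg : DifferentiableOn ℂ g (ball (0:ℂ) 1)) {t : ℝ}
    (ht : t ∈ Ioo (-1:ℝ) 1) :
    HasDerivAt (fun s : ℝ => deriv g s) (deriv (deriv g) t) t := by
  have hz := memb (abs_lt_of_Ioo ht)
  have hA : AnalyticOnNhd ℂ g (ball (0:ℂ) 1) := hg.analyticOnNhd isOpen_ball
  exact ((hA.deriv _ hz).differentiableAt.hasDerivAt).comp_ofReal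

lemma hasDerivAt_E (hg : DifferentiableOn ℂ g (ball (0:ℂ) 1))
    (hg' : ∀ z ∈ ball (0:ℂ) 1, deriv g z ≠ 0) {t : ℝ} (ht : t ∈ Ioo (-1:ℝ) 1) :
    HasDerivAt (E g) (-(P g t) / 2 * E g t) t := by
  have h := (((hasDerivAt_L hg hg' ht).neg).div_const 2).cexp
  exact h.congr_deriv (mul_comm _ _)

lemma hasDerivAt_u (hg : DifferentiableOn ℂ g (ball (0:ℂ) 1))
    (hg' : ∀ z ∈ ball (0:ℂ) 1, deriv g z ≠ 0) {t : ℝ} (ht : t ∈ Ioo (-1:ℝ) 1) :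
    HasDerivAt (u g c) (u1 g c t) t := by
  have h := ((hasDerivAt_gc hg ht).sub_const c).mul (hasDerivAt_E hg hg' ht)
  refine h.congr_deriv (Eq.symm ?_)
  simp only [u1, u]; ring

lemma hasDerivAt_u1 (hg : DifferentiableOn ℂ g (ball (0:ℂ) 1))
    (hg' : ∀ z ∈ ball (0:ℂ) 1, deriv g z ≠ 0) {t : ℝ} (ht : t ∈ Ioo (-1:ℝ) 1) :
    HasDerivAt (u1 g c) (-(schwarzian g t) / 2 * u g c t) t := by
  have hz := memb (abs_lt_of_Ioo ht)
  have hF1 : deriv g (t:ℂ) ≠ 0 := hg' _ hz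
  have hPc : HasDerivAt (fun s : ℝ => P g s)
      (schwarzian g t + (P g t) ^ 2 / 2) t := (hasDerivAt_P hg hg' hz).comp_ofReal
  have hin : HasDerivAt (fun s : ℝ => deriv g s - (g s - c) * P g s / 2)
      (deriv (deriv g) t - ((deriv g t) * P g t +
        (g t - c) * (schwarzian g t + (P g t) ^ 2 / 2)) / 2) t :=
    (hasDerivAt_F1c hg ht).sub
      ((((hasDerivAt_gc hg ht).sub_const c).mul hPc).div_const 2)
  have h := hin.mul (hasDerivAt_E hg hg' ht)
  refine h.congr_deriv (Eq.symm ?_)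
  have hF2 : deriv (deriv g) (t:ℂ) = P g t * deriv g t := by
    rw [P, div_mul_cancel₀ _ hF1]
  simp only [u1, u, E]
  rw [hF2]
  ring
noncomputable def u2c (g : ℂ → ℂ) (c : ℂ) (t : ℝ) : ℂ :=
  -(schwarzian g t) / 2 * u g c t

noncomputable def A (g : ℂ → ℂ) (c : ℂ) (t : ℝ) : ℝ := Complex.normSq (u g c t)
noncomputable def N (g : ℂ → ℂ) (c : ℂ) (t : ℝ) : ℝ :=
  (u g c t).re * (u1 g c t).re + (u g c t).im * (u1 g c t).im
noncomputable def ND (g : ℂ → ℂ) (c : ℂ) (t : ℝ) : ℝ :=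
  Complex.normSq (u1 g c t) +
    ((u g c t).re * (u2c g c t).re + (u g c t).im * (u2c g c t).im)
noncomputable def ph (g : ℂ → ℂ) (c : ℂ) (t : ℝ) : ℝ := Real.sqrt (A g c t)
noncomputable def dph (g : ℂ → ℂ) (c : ℂ) (t : ℝ) : ℝ := N g c t / Real.sqrt (A g c t)
noncomputable def DD (g : ℂ → ℂ) (c : ℂ) (t : ℝ) : ℝ :=
  (ND g c t * ph g c t - N g c t * dph g c t) / (ph g c t) ^ 2
noncomputable def Y (t : ℝ) : ℝ := Real.sqrt (1 - t ^ 2)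
noncomputable def dY (t : ℝ) : ℝ := -t / Real.sqrt (1 - t ^ 2)
noncomputable def W (g : ℂ → ℂ) (c : ℂ) (t : ℝ) : ℝ :=
  dph g c t * Y t - ph g c t * dY t
noncomputable def hq (g : ℂ → ℂ) (c : ℂ) (t : ℝ) : ℝ := ph g c t / Y t

variable {g : ℂ → ℂ} {c : ℂ} {t : ℝ}


lemma hasDerivAt_u2 (hg : DifferentiableOn ℂ g (ball (0:ℂ) 1))
    (hg' : ∀ z ∈ ball (0:ℂ) 1, deriv g z ≠ 0) (ht : t ∈ Ioo (-1:ℝ) 1) :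
    HasDerivAt (u1 g c) (u2c g c t) t := hasDerivAt_u1 hg hg' ht

lemma hasDerivAt_N (hg : DifferentiableOn ℂ g (ball (0:ℂ) 1))
    (hg' : ∀ z ∈ ball (0:ℂ) 1, deriv g z ≠ 0) (ht : t ∈ Ioo (-1:ℝ) 1) :
    HasDerivAt (N g c) (ND g c t) t := by
  have hu := hasDerivAt_u (c := c) hg hg' ht
  have hu1 := hasDerivAt_u2 (c := c) hg hg' ht
  have h := ((creal hu).mul (creal hu1)).add ((cimag hu).mul (cimag hu1))
  refine h.congr_deriv (Eq.symm ?_)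
  simp only [ND, Complex.normSq_apply]
  ring

lemma hasDerivAt_A (hg : DifferentiableOn ℂ g (ball (0:ℂ) 1))
    (hg' : ∀ z ∈ ball (0:ℂ) 1, deriv g z ≠ 0) (ht : t ∈ Ioo (-1:ℝ) 1) :
    HasDerivAt (A g c) (2 * N g c t) t := by
  have hu := hasDerivAt_u (c := c) hg hg' ht
  have h := ((creal hu).mul (creal hu)).add ((cimag hu).mul (cimag hu))
  have he : A g c = fun s => (u g c s).re * (u g c s).re + (u g c s).im * (u g c s).im := by
    funext s; simp [A, Complex.normSq_apply]
  rw [he]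
  refine h.congr_deriv (Eq.symm ?_)
  simp only [N]; ring

lemma A_pos (h0 : u g c t ≠ 0) : 0 < A g c t := Complex.normSq_pos.2 h0

lemma ph_pos (h0 : u g c t ≠ 0) : 0 < ph g c t := Real.sqrt_pos.2 (A_pos h0)

lemma ph_sq (h0 : u g c t ≠ 0) : ph g c t ^ 2 = A g c t :=
  Real.sq_sqrt (A_pos h0).le

lemma hasDerivAt_ph (hg : DifferentiableOn ℂ g (ball (0:ℂ) 1))
    (hg' : ∀ z ∈ ball (0:ℂ) 1, deriv g z ≠ 0) (ht : t ∈ Ioo (-1:ℝ) 1)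
    (h0 : u g c t ≠ 0) : HasDerivAt (ph g c) (dph g c t) t := by
  have h := (hasDerivAt_A (c := c) hg hg' ht).sqrt (A_pos h0).ne'
  refine h.congr_deriv (Eq.symm ?_)
  simp only [dph]
  rw [mul_div_mul_left (N g c t) (Real.sqrt (A g c t)) two_ne_zero]

lemma hasDerivAt_dph (hg : DifferentiableOn ℂ g (ball (0:ℂ) 1))
    (hg' : ∀ z ∈ ball (0:ℂ) 1, deriv g z ≠ 0) (ht : t ∈ Ioo (-1:ℝ) 1)
    (h0 : u g c t ≠ 0) : HasDerivAt (dph g c) (DD g c t) t := by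
  have h := (hasDerivAt_N (c := c) hg hg' ht).div
    (hasDerivAt_ph hg hg' ht h0) (ph_pos h0).ne'
  exact h


lemma one_sub_sq_pos (ht : t ∈ Ioo (-1:ℝ) 1) : 0 < 1 - t ^ 2 := by
  nlinarith [ht.1, ht.2]

lemma Y_pos (ht : t ∈ Ioo (-1:ℝ) 1) : 0 < Y t := Real.sqrt_pos.2 (one_sub_sq_pos ht)

lemma Y_sq (ht : t ∈ Ioo (-1:ℝ) 1) : Y t ^ 2 = 1 - t ^ 2 :=
  Real.sq_sqrt (one_sub_sq_pos ht).le

lemma hasDerivAt_Y (ht : t ∈ Ioo (-1:ℝ) 1) : HasDerivAt Y (dY t) t := by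
  have hf : HasDerivAt (fun s : ℝ => 1 - s ^ 2) (-(2 * t)) t := by
    simpa using ((hasDerivAt_pow 2 t).const_sub 1)
  have h := hf.sqrt (one_sub_sq_pos ht).ne'
  refine h.congr_deriv (Eq.symm ?_)
  rw [dY, neg_div, neg_div]
  rw [mul_div_mul_left t (Real.sqrt (1 - t ^ 2)) two_ne_zero]

lemma hasDerivAt_dY (ht : t ∈ Ioo (-1:ℝ) 1) : HasDerivAt dY (-(1 / Y t ^ 3)) t := by
  have h := ((hasDerivAt_id t).neg).div (hasDerivAt_Y ht) (Y_pos ht).ne'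
  refine h.congr_deriv (Eq.symm ?_)
  have hv := one_sub_sq_pos ht
  have hsq : Real.sqrt (1 - t ^ 2) ^ 2 = 1 - t ^ 2 := Real.sq_sqrt hv.le
  have hs : Real.sqrt (1 - t ^ 2) ≠ 0 := (Real.sqrt_pos.2 hv).ne'
  simp only [dY, Y, id_eq, Pi.neg_apply]
  field_simp
  nlinarith [hsq, Real.sqrt_nonneg (1 - t ^ 2)]

lemma hasDerivAt_W (hg : DifferentiableOn ℂ g (ball (0:ℂ) 1))
    (hg' : ∀ z ∈ ball (0:ℂ) 1, deriv g z ≠ 0) (ht : t ∈ Ioo (-1:ℝ) 1)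
    (h0 : u g c t ≠ 0) :
    HasDerivAt (W g c) (DD g c t * Y t + ph g c t / Y t ^ 3) t := by
  have h := ((hasDerivAt_dph hg hg' ht h0).mul (hasDerivAt_Y ht)).sub
    ((hasDerivAt_ph hg hg' ht h0).mul (hasDerivAt_dY ht))
  refine h.congr_deriv (Eq.symm ?_)
  ring

lemma hasDerivAt_hq (hg : DifferentiableOn ℂ g (ball (0:ℂ) 1))
    (hg' : ∀ z ∈ ball (0:ℂ) 1, deriv g z ≠ 0) (ht : t ∈ Ioo (-1:ℝ) 1)
    (h0 : u g c t ≠ 0) :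
    HasDerivAt (hq g c) (W g c t / Y t ^ 2) t := by
  have h := (hasDerivAt_ph hg hg' ht h0).div (hasDerivAt_Y ht) (Y_pos ht).ne'
  exact h.congr_deriv rfl

lemma sturm_nonneg (ht : t ∈ Ioo (-1:ℝ) 1) (h0 : u g c t ≠ 0)
    (hSb : (1 - t ^ 2) ^ 2 * ‖schwarzian g t‖ ≤ 2) :
    0 ≤ DD g c t * Y t + ph g c t / Y t ^ 3 := by
  have hApos : 0 < A g c t := A_pos h0
  have hp : 0 < ph g c t := ph_pos h0
  have hps : ph g c t ^ 2 = A g c t := ph_sq h0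
  have hv : 0 < 1 - t ^ 2 := one_sub_sq_pos ht
  have hY : 0 < Y t := Y_pos ht
  have hYs : Y t ^ 2 = 1 - t ^ 2 := Y_sq ht
  set S := schwarzian g (t : ℂ) with hSdef
  -- cross term identity
  have h1 : (starRingEnd ℂ) (u g c t) * u2c g c t = -(S) / 2 * ((A g c t : ℝ) : ℂ) := by
    have : (starRingEnd ℂ) (u g c t) * u g c t = ((A g c t : ℝ) : ℂ) := by
      rw [A, mul_comm]; exact Complex.mul_conj (u g c t)
    rw [u2c]
    calc (starRingEnd ℂ) (u g c t) * (-(S) / 2 * u g c t)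
        = -(S) / 2 * ((starRingEnd ℂ) (u g c t) * u g c t) := by ring
      _ = -(S) / 2 * ((A g c t : ℝ) : ℂ) := by rw [this]
  have hcross : (u g c t).re * (u2c g c t).re + (u g c t).im * (u2c g c t).im
      = -(S.re) / 2 * A g c t := by
    have h2 : ((starRingEnd ℂ) (u g c t) * u2c g c t).re
        = (u g c t).re * (u2c g c t).re + (u g c t).im * (u2c g c t).im := by
      simp [Complex.mul_re, Complex.conj_re, Complex.conj_im]
    rw [← h2, h1, Complex.mul_re]
    simp only [Complex.ofReal_re, Complex.ofReal_im, mul_zero, sub_zero]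
    norm_num
  have habsr : |S.re| ≤ ‖S‖ := Complex.abs_re_le_norm S
  have hS2 : ‖S‖ * (1 - t ^ 2) ^ 2 ≤ 2 := by linarith [hSb]
  have h6 : 0 ≤ -(S.re) / 2 * (1 - t ^ 2) ^ 2 + 1 := by
    have hmul := mul_le_mul_of_nonneg_right habsr (sq_nonneg (1 - t ^ 2))
    have hmul2 := mul_le_mul_of_nonneg_right (le_abs_self S.re) (sq_nonneg (1 - t ^ 2))
    linarith
  -- Cauchy-Schwarz
  have hCS : N g c t ^ 2 ≤ A g c t * Complex.normSq (u1 g c t) := by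
    have hAe : A g c t = (u g c t).re ^ 2 + (u g c t).im ^ 2 := by
      rw [A, Complex.normSq_apply]; ring
    have hu1e : Complex.normSq (u1 g c t) = (u1 g c t).re ^ 2 + (u1 g c t).im ^ 2 := by
      rw [Complex.normSq_apply]; ring
    rw [hAe, hu1e, N]
    nlinarith [sq_nonneg ((u g c t).re * (u1 g c t).im - (u g c t).im * (u1 g c t).re)]
  -- DD * ph^3 = ND*A - N^2
  have hdphmul : dph g c t * ph g c t = N g c t := by
    show N g c t / Real.sqrt (A g c t) * Real.sqrt (A g c t) = N g c t
    exact div_mul_cancel₀ _ hp.ne'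
  have hDDph : DD g c t * ph g c t ^ 3 = ND g c t * A g c t - N g c t ^ 2 := by
    have h1 : DD g c t * ph g c t ^ 3
        = (ND g c t * ph g c t - N g c t * dph g c t) * ph g c t := by
      rw [DD]; field_simp
    calc DD g c t * ph g c t ^ 3
        = (ND g c t * ph g c t - N g c t * dph g c t) * ph g c t := h1
      _
        = ND g c t * ph g c t ^ 2 - N g c t * (dph g c t * ph g c t) := by ring
      _ = ND g c t * A g c t - N g c t ^ 2 := by rw [hdphmul, hps]; ring
  -- K * v^2 + A^2 ≥ 0
  have hK : 0 ≤ (ND g c t * A g c t - N g c t ^ 2) * (1 - t ^ 2) ^ 2 + A g c t ^ 2 := by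
    have hNDe : ND g c t = Complex.normSq (u1 g c t) + -(S.re) / 2 * A g c t := by
      rw [ND, hcross]
    rw [hNDe]
    nlinarith [hCS, h6, hApos, sq_nonneg (1 - t ^ 2), mul_pos hApos hApos]
  -- conclude
  have hpos : 0 < Y t ^ 3 * ph g c t ^ 3 := by positivity
  have hprod : (DD g c t * Y t + ph g c t / Y t ^ 3) * (Y t ^ 3 * ph g c t ^ 3)
      = (ND g c t * A g c t - N g c t ^ 2) * (1 - t ^ 2) ^ 2 + A g c t ^ 2 := by
    have e1 : (DD g c t * Y t + ph g c t / Y t ^ 3) * (Y t ^ 3 * ph g c t ^ 3)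
        = (DD g c t * ph g c t ^ 3) * (Y t ^ 2) ^ 2 + (ph g c t ^ 2) ^ 2 := by
      field_simp
    rw [e1, hDDph, hYs, hps]
  by_contra hlt
  push_neg at hlt
  have hneg : (DD g c t * Y t + ph g c t / Y t ^ 3) * (Y t ^ 3 * ph g c t ^ 3) < 0 :=
    mul_neg_of_neg_of_pos hlt hpos
  rw [hprod] at hneg
  linarith

lemma contAt_u (hg : DifferentiableOn ℂ g (ball (0:ℂ) 1))
    (hg' : ∀ z ∈ ball (0:ℂ) 1, deriv g z ≠ 0) (ht : t ∈ Ioo (-1:ℝ) 1) :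
    ContinuousAt (u g c) t := (hasDerivAt_u hg hg' ht).continuousAt

lemma contAt_ph (hg : DifferentiableOn ℂ g (ball (0:ℂ) 1))
    (hg' : ∀ z ∈ ball (0:ℂ) 1, deriv g z ≠ 0) (ht : t ∈ Ioo (-1:ℝ) 1) :
    ContinuousAt (ph g c) t := by
  have := contAt_u (c := c) hg hg' ht
  exact (Real.continuous_sqrt.continuousAt).comp
    ((Complex.continuous_normSq.continuousAt).comp this)

lemma u_eq_zero_iff {t : ℝ} : u g c t = 0 ↔ g t = c := by
  rw [u, mul_eq_zero]
  simp [E, Complex.exp_ne_zero, sub_eq_zero]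

lemma contAt_Y {t : ℝ} : ContinuousAt Y t :=
  (Real.continuous_sqrt.comp (continuous_const.sub (continuous_pow 2))).continuousAt

lemma core (hg : DifferentiableOn ℂ g (ball (0:ℂ) 1))
    (hg' : ∀ z ∈ ball (0:ℂ) 1, deriv g z ≠ 0)
    (hS : ∀ z ∈ ball (0:ℂ) 1,
      (1 - ‖z‖ ^ 2) ^ 2 * ‖schwarzian g z‖ ≤ 2)
    {ρ : ℝ} (hρ0 : 0 < ρ) (hρ1 : ρ < 1) (hgg : g ρ = g 0) : False := by
  classical
  set c := g 0 with hc
  have hρIoo : ρ ∈ Ioo (-1:ℝ) 1 := ⟨by linarith, hρ1⟩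
  have h0Ioo : (0:ℝ) ∈ Ioo (-1:ℝ) 1 := by norm_num
  have hSb : ∀ {s : ℝ}, s ∈ Ioo (-1:ℝ) 1 →
      (1 - s ^ 2) ^ 2 * ‖schwarzian g s‖ ≤ 2 := by
    intro s hs
    have := hS s (memb (abs_lt_of_Ioo hs))
    simpa [Complex.norm_real, sq_abs] using this
  -- the set of positive zeros
  set T : Set ℝ := {s : ℝ | s ∈ Ioc 0 ρ ∧ g s = c} with hT
  have hTne : T.Nonempty := ⟨ρ, ⟨hρ0, le_refl ρ⟩, hgg⟩
  have hTbdd : BddBelow T := ⟨0, fun s hs => (hs.1.1).le⟩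
  set t1 := sInf T with ht1
  have ht1nonneg : 0 ≤ t1 := le_csInf hTne fun s hs => (hs.1.1).le
  have ht1le : t1 ≤ ρ := csInf_le hTbdd ⟨⟨hρ0, le_refl ρ⟩, hgg⟩
  -- if zeros accumulate at 0 get a contradiction by the identity theorem
  have hA : AnalyticOnNhd ℂ g (ball (0:ℂ) 1) := hg.analyticOnNhd isOpen_ball
  have ht1pos : 0 < t1 := by
    rcases lt_or_eq_of_le ht1nonneg with h | h
    · exact h
    exfalso
    have hfreq : ∃ᶠ z in nhdsWithin (0:ℂ) {(0:ℂ)}ᶜ, g z = c := by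
      rw [Filter.frequently_iff]
      intro U hU
      rcases Metric.mem_nhdsWithin_iff.1 hU with ⟨ε, hε, hsub⟩
      have : sInf T < min ε 1 := by
        rw [← ht1, ← h]; exact lt_min hε one_pos
      rcases exists_lt_of_csInf_lt hTne this with ⟨s, hsT, hsε⟩
      refine ⟨(s:ℂ), hsub ⟨?_, ?_⟩, hsT.2⟩
      · simp only [Metric.mem_ball, Complex.dist_eq, sub_zero]
        rw [Complex.norm_real, Real.norm_eq_abs, abs_of_pos hsT.1.1]
        exact hsε.trans_le (min_le_left _ _)
      · simp only [Set.mem_compl_iff, Set.mem_singleton_iff]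
        exact_mod_cast (hsT.1.1).ne'
    have heq : EqOn g (fun _ => c) (ball (0:ℂ) 1) :=
      hA.eqOn_of_preconnected_of_frequently_eq (analyticOnNhd_const)
        (convex_ball (0:ℂ) 1).isPreconnected (memb (by norm_num : |(0:ℝ)| < 1) )
        (by simpa using hfreq)
    have hd : deriv g 0 = 0 := by
      have hev : g =ᶠ[nhds (0:ℂ)] fun _ => c :=
        Filter.eventuallyEq_of_mem (isOpen_ball.mem_nhds (memb (by norm_num))) heq
      rw [hev.deriv_eq]
      exact deriv_const _ _
    exact hg' 0 (memb (by norm_num  : |(0:ℝ)| < 1)) hd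
  have ht1Ioo : t1 ∈ Ioo (-1:ℝ) 1 := ⟨by linarith, lt_of_le_of_lt ht1le hρ1⟩
  -- g t1 = c
  have hgc_cont : ContinuousOn (fun s : ℝ => g s) (Icc 0 ρ) := by
    intro x hx
    have hxI : x ∈ Ioo (-1:ℝ) 1 := ⟨by linarith [hx.1], lt_of_le_of_lt hx.2 hρ1⟩
    exact (hasDerivAt_gc hg hxI).continuousAt.continuousWithinAt
  have hT'closed : IsClosed {s : ℝ | s ∈ Icc 0 ρ ∧ g s = c} := by
    have : {s : ℝ | s ∈ Icc 0 ρ ∧ g s = c}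
        = Icc 0 ρ ∩ (fun s : ℝ => g s) ⁻¹' {c} := by
      ext s; simp [Set.mem_inter_iff]
    rw [this]
    exact hgc_cont.preimage_isClosed_of_isClosed isClosed_Icc isClosed_singleton
  have hgt1 : g t1 = c := by
    have hmem : t1 ∈ closure T := csInf_mem_closure hTne hTbdd
    have hsubT : T ⊆ {s : ℝ | s ∈ Icc 0 ρ ∧ g s = c} :=
      fun s hs => ⟨⟨hs.1.1.le, hs.1.2⟩, hs.2⟩
    exact ((closure_minimal hsubT hT'closed) hmem).2
  -- no zeros inside (0, t1)
  have hnz : ∀ s ∈ Ioo (0:ℝ) t1, g s ≠ c := by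
    intro s hs hzero
    have : t1 ≤ s := csInf_le hTbdd ⟨⟨hs.1, hs.2.le.trans ht1le⟩, hzero⟩
    exact absurd this (not_le.2 hs.2)
  have hIooSub : Ioo (0:ℝ) t1 ⊆ Ioo (-1:ℝ) 1 :=
    fun x hx => ⟨by linarith [hx.1], lt_trans hx.2 ht1Ioo.2⟩
  have hune : ∀ s ∈ Ioo (0:ℝ) t1, u g c s ≠ 0 :=
    fun s hs h => hnz s hs (u_eq_zero_iff.1 h)
  have hu0 : u g c 0 = 0 := u_eq_zero_iff.2 (by simp [hc])
  have hut1 : u g c t1 = 0 := u_eq_zero_iff.2 hgt1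
  have hph0 : ph g c 0 = 0 := by rw [ph, A, hu0]; simp
  have hpht1 : ph g c t1 = 0 := by rw [ph, A, hut1]; simp
  -- maximum of hq on [0, t1]
  have hIccSub : Icc (0:ℝ) t1 ⊆ Ioo (-1:ℝ) 1 :=
    fun x hx => ⟨by linarith [hx.1], lt_of_le_of_lt hx.2 ht1Ioo.2⟩
  have hqcont : ContinuousOn (hq g c) (Icc 0 t1) := by
    intro x hx
    have hxI := hIccSub hx
    have hY := (Y_pos hxI).ne'
    exact ((contAt_ph hg hg' hxI).div contAt_Y hY).continuousWithinAt
  obtain ⟨m, hmIcc, hmmax⟩ := isCompact_Icc.exists_isMaxOn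
    (Set.nonempty_Icc.2 ht1pos.le) hqcont
  have hhalf : t1 / 2 ∈ Ioo (0:ℝ) t1 := ⟨by linarith, by linarith⟩
  have hqhalf : 0 < hq g c (t1 / 2) := by
    have hxI := hIooSub hhalf
    exact div_pos (ph_pos (hune _ hhalf)) (Y_pos hxI)
  have hqm : 0 < hq g c m :=
    lt_of_lt_of_le hqhalf (hmmax ⟨hhalf.1.le, hhalf.2.le⟩)
  have hq0 : hq g c 0 = 0 := by rw [hq, hph0]; simp
  have hqt1 : hq g c t1 = 0 := by rw [hq, hpht1]; simp
  have hm0 : 0 < m := by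
    rcases lt_or_eq_of_le hmIcc.1 with h | h
    · exact h
    · exfalso; rw [← h] at hqm; rw [hq0] at hqm; exact lt_irrefl 0 hqm
  have hmt1 : m < t1 := by
    rcases lt_or_eq_of_le hmIcc.2 with h | h
    · exact h
    · exfalso; rw [h] at hqm; rw [hqt1] at hqm; exact lt_irrefl 0 hqm
  have hmIoo : m ∈ Ioo (0:ℝ) t1 := ⟨hm0, hmt1⟩
  -- derivative of hq vanishes at m
  have hWm : W g c m = 0 := by
    have hder := hasDerivAt_hq hg hg' (hIooSub hmIoo) (hune m hmIoo)
    have hloc : IsLocalMax (hq g c) m :=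
      hmmax.isLocalMax (Icc_mem_nhds hm0 hmt1)
    have := hloc.hasDerivAt_eq_zero hder
    have hY := (Y_pos (hIooSub hmIoo)).ne'
    exact (div_eq_zero_iff.1 this).resolve_right (pow_ne_zero 2 hY)
  -- W is monotone on (0, t1)
  have hWmono : ∀ s ∈ Ioo (0:ℝ) m, W g c s ≤ 0 := by
    intro s hs
    have hsm : s < m := hs.2
    have hsubIcc : Icc s m ⊆ Ioo (0:ℝ) t1 :=
      fun x hx => ⟨lt_of_lt_of_le hs.1 hx.1, lt_of_le_of_lt hx.2 hmt1⟩
    have hmono : MonotoneOn (W g c) (Icc s m) := by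
      apply monotoneOn_of_deriv_nonneg (convex_Icc s m)
      · intro x hx
        exact (hasDerivAt_W hg hg' (hIooSub (hsubIcc hx))
          (hune x (hsubIcc hx))).continuousAt.continuousWithinAt
      · intro x hx
        rw [interior_Icc] at hx
        exact (hasDerivAt_W hg hg' (hIooSub (hsubIcc ⟨hx.1.le, hx.2.le⟩))
          (hune x (hsubIcc ⟨hx.1.le, hx.2.le⟩))).differentiableAt.differentiableWithinAt
      · intro x hx
        rw [interior_Icc] at hx
        have hxmem := hsubIcc ⟨hx.1.le, hx.2.le⟩
        have hd := hasDerivAt_W hg hg' (hIooSub hxmem) (hune x hxmem)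
        rw [hd.deriv]
        exact sturm_nonneg (hIooSub hxmem) (hune x hxmem) (hSb (hIooSub hxmem))
    have := hmono (Set.left_mem_Icc.2 hsm.le) (Set.right_mem_Icc.2 hsm.le) hsm.le
    rw [hWm] at this
    exact this
  -- hq is antitone on (0, m]
  have hqanti : ∀ s ∈ Ioo (0:ℝ) m, hq g c m ≤ hq g c s := by
    intro s hs
    have hsm : s < m := hs.2
    have hsubIcc : Icc s m ⊆ Ioo (0:ℝ) t1 :=
      fun x hx => ⟨lt_of_lt_of_le hs.1 hx.1, lt_of_le_of_lt hx.2 hmt1⟩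
    have hanti : AntitoneOn (hq g c) (Icc s m) := by
      apply antitoneOn_of_deriv_nonpos (convex_Icc s m)
      · intro x hx
        exact (hasDerivAt_hq hg hg' (hIooSub (hsubIcc hx))
          (hune x (hsubIcc hx))).continuousAt.continuousWithinAt
      · intro x hx
        rw [interior_Icc] at hx
        exact (hasDerivAt_hq hg hg' (hIooSub (hsubIcc ⟨hx.1.le, hx.2.le⟩))
          (hune x (hsubIcc ⟨hx.1.le, hx.2.le⟩))).differentiableAt.differentiableWithinAt
      · intro x hx
        rw [interior_Icc] at hx
        have hxmem := hsubIcc ⟨hx.1.le, hx.2.le⟩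
        have hd := hasDerivAt_hq hg hg' (hIooSub hxmem) (hune x hxmem)
        rw [hd.deriv]
        apply div_nonpos_of_nonpos_of_nonneg
        · rcases eq_or_lt_of_le hx.1.le with h | h
          · rw [← h] at *
            exact hWmono s ⟨hs.1, hsm⟩ |>.trans (le_refl 0) |>.trans (le_refl 0)
          · exact hWmono x ⟨lt_of_lt_of_le hs.1 hx.1.le, hx.2⟩
        · positivity
    have := hanti (Set.left_mem_Icc.2 hsm.le) (Set.right_mem_Icc.2 hsm.le) hsm.le
    exact this
  -- limit as s → 0⁺ gives contradiction
  have hcont0 : ContinuousWithinAt (hq g c) (Ioi 0) 0 :=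
    ((contAt_ph hg hg' h0Ioo).div contAt_Y (Y_pos h0Ioo).ne').continuousWithinAt
  have hev : ∀ᶠ s in nhdsWithin 0 (Ioi 0), hq g c m ≤ hq g c s := by
    filter_upwards [Ioo_mem_nhdsGT_of_mem ⟨le_refl (0:ℝ), hm0⟩] with s hs
    exact hqanti s hs
  have hle : hq g c m ≤ hq g c 0 := ge_of_tendsto hcont0 hev
  rw [hq0] at hle
  linarith

/-- Chain rule for the Schwarzian derivative under a Möbius-type map. -/
lemma schwarzian_comp (f M m q dq : ℂ → ℂ) {U : Set ℂ} (hU : IsOpen U)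
    (hMap : MapsTo M U (ball (0:ℂ) 1))
    (hf : DifferentiableOn ℂ f (ball (0:ℂ) 1))
    (hf' : ∀ z ∈ ball (0:ℂ) 1, deriv f z ≠ 0)
    (hMd : ∀ z ∈ U, HasDerivAt M (m z) z)
    (hm : ∀ z ∈ U, m z ≠ 0)
    (hmd : ∀ z ∈ U, HasDerivAt m (q z * m z) z)
    (hqd : ∀ z ∈ U, HasDerivAt q (dq z) z)
    (hSM : ∀ z ∈ U, dq z - q z ^ 2 / 2 = 0) :
    ∀ z ∈ U, DifferentiableAt ℂ (f ∘ M) z ∧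
      deriv (f ∘ M) z = deriv f (M z) * m z ∧
      schwarzian (f ∘ M) z = schwarzian f (M z) * m z ^ 2 := by
  have hA : AnalyticOnNhd ℂ f (ball (0:ℂ) 1) := hf.analyticOnNhd isOpen_ball
  -- first derivative everywhere on U
  have hg1 : ∀ z ∈ U, HasDerivAt (f ∘ M) (deriv f (M z) * m z) z := by
    intro z hz
    have hfd : HasDerivAt f (deriv f (M z)) (M z) :=
      (hf.differentiableAt (isOpen_ball.mem_nhds (hMap hz))).hasDerivAt
    exact hfd.comp z (hMd z hz)
  have hderiv1 : ∀ z ∈ U, deriv (f ∘ M) z = deriv f (M z) * m z :=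
    fun z hz => (hg1 z hz).deriv
  -- second derivative
  have hg2 : ∀ z ∈ U, deriv (deriv (f ∘ M)) z
      = deriv (deriv f) (M z) * m z ^ 2 + deriv f (M z) * (q z * m z) := by
    intro z hz
    have hev : deriv (f ∘ M) =ᶠ[nhds z] fun w => deriv f (M w) * m w :=
      Filter.eventuallyEq_of_mem (hU.mem_nhds hz) hderiv1
    rw [hev.deriv_eq]
    have hF2 : HasDerivAt (deriv f) (deriv (deriv f) (M z)) (M z) :=
      ((hA.deriv _ (hMap hz)).differentiableAt).hasDerivAt
    have h2 : HasDerivAt (fun w => deriv f (M w) * m w)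
        (deriv (deriv f) (M z) * m z * m z + deriv f (M z) * (q z * m z)) z :=
      ((hF2.comp z (hMd z hz)).mul (hmd z hz))
    rw [h2.deriv]; ring
  -- P of the composition
  have hPg : ∀ z ∈ U, P (f ∘ M) z = P f (M z) * m z + q z := by
    intro z hz
    have hF1 : deriv f (M z) ≠ 0 := hf' _ (hMap hz)
    have hmz := hm z hz
    rw [P, hg2 z hz, hderiv1 z hz, P]
    field_simp
  intro z hz
  refine ⟨(hg1 z hz).differentiableAt, hderiv1 z hz, ?_⟩
  -- derivative of P (f∘M)
  have hev : (fun w => deriv (deriv (f ∘ M)) w / deriv (f ∘ M) w)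
      =ᶠ[nhds z] fun w => P f (M w) * m w + q w :=
    Filter.eventuallyEq_of_mem (hU.mem_nhds hz) hPg
  have hPfd : HasDerivAt (P f) (schwarzian f (M z) + (P f (M z)) ^ 2 / 2) (M z) :=
    hasDerivAt_P hf hf' (hMap hz)
  have h3 : HasDerivAt (fun w => P f (M w) * m w + q w)
      ((schwarzian f (M z) + (P f (M z)) ^ 2 / 2) * m z * m z
        + P f (M z) * (q z * m z) + dq z) z :=
    ((hPfd.comp z (hMd z hz)).mul (hmd z hz)).add (hqd z hz)
  have hds : deriv (fun w => deriv (deriv (f ∘ M)) w / deriv (f ∘ M) w) z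
      = (schwarzian f (M z) + (P f (M z)) ^ 2 / 2) * m z * m z
        + P f (M z) * (q z * m z) + dq z := by
    rw [hev.deriv_eq, h3.deriv]
  show deriv (fun w => deriv (deriv (f ∘ M)) w / deriv (f ∘ M) w) z
      - (deriv (deriv (f ∘ M)) z / deriv (f ∘ M) z) ^ 2 / 2
      = schwarzian f (M z) * m z ^ 2
  rw [hds]
  have hPgz : deriv (deriv (f ∘ M)) z / deriv (f ∘ M) z = P f (M z) * m z + q z :=
    hPg z hz
  rw [hPgz]
  have hSMz := hSM z hz
  linear_combination hSMz
lemma key (α β z : ℂ) (hβ : β * (starRingEnd ℂ) β = 1) :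
    Complex.normSq (1 + (starRingEnd ℂ) α * β * z) - Complex.normSq (α + β * z)
      = (1 - Complex.normSq α) * (1 - Complex.normSq z) := by
  have h : ∀ x : ℂ, ((Complex.normSq x : ℝ) : ℂ) = x * (starRingEnd ℂ) x :=
    fun x => (Complex.mul_conj x).symm
  have hC : ((Complex.normSq (1 + (starRingEnd ℂ) α * β * z)
      - Complex.normSq (α + β * z) : ℝ) : ℂ)
      = (((1 - Complex.normSq α) * (1 - Complex.normSq z) : ℝ) : ℂ) := by
    push_cast
    rw [h, h, h, h]
    simp only [map_add, map_mul, map_one, Complex.conj_conj]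
    linear_combination z * (starRingEnd ℂ) z * (α * (starRingEnd ℂ) α - 1) * hβ
  exact_mod_cast hC

lemma abs_lt_one_of_normSq_lt_one {z : ℂ} (h : Complex.normSq z < 1) :
    ‖z‖ < 1 := by
  nlinarith [Complex.sq_norm z, norm_nonneg z]

lemma mobius_core (f : ℂ → ℂ)
    (hf : DifferentiableOn ℂ f (ball (0:ℂ) 1))
    (hf' : ∀ z ∈ ball (0:ℂ) 1, deriv f z ≠ 0)
    (hS : ∀ z ∈ ball (0:ℂ) 1,
      (1 - ‖z‖ ^ 2) ^ 2 * ‖schwarzian f z‖ ≤ 2)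
    {a b : ℂ} (ha : a ∈ ball (0:ℂ) 1) (hb : b ∈ ball (0:ℂ) 1)
    (hab : a ≠ b) (hfab : f a = f b) : False := by
  have haa : ‖a‖ < 1 := by simpa using mem_ball_zero_iff.1 ha
  have hbb : ‖b‖ < 1 := by simpa using mem_ball_zero_iff.1 hb
  have hnsa : Complex.normSq a < 1 := by
    rw [Complex.normSq_eq_norm_sq]; nlinarith [norm_nonneg a]
  have hnsb : Complex.normSq b < 1 := by
    rw [Complex.normSq_eq_norm_sq]; nlinarith [norm_nonneg b]
  have h1ab : (1:ℂ) - (starRingEnd ℂ) a * b ≠ 0 := by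
    intro h
    have he : (starRingEnd ℂ) a * b = 1 := by linear_combination -h
    have h2 : ‖(starRingEnd ℂ) a * b‖ = 1 := by rw [he]; simp
    rw [norm_mul, Complex.norm_conj] at h2
    nlinarith [norm_nonneg a, norm_nonneg b]
  set w := (b - a) / (1 - (starRingEnd ℂ) a * b) with hw
  have hwne : w ≠ 0 := div_ne_zero (sub_ne_zero.2 hab.symm) h1ab
  set ρ := ‖w‖ with hρdef
  have hρ0 : 0 < ρ := norm_pos_iff.2 hwne
  have hkd : Complex.normSq (1 - (starRingEnd ℂ) a * b) - Complex.normSq (b - a)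
      = (1 - Complex.normSq a) * (1 - Complex.normSq b) := by
    have hk := key (-a) 1 b (by simp)
    have e1 : (1:ℂ) + (starRingEnd ℂ) (-a) * 1 * b = 1 - (starRingEnd ℂ) a * b := by
      simp; ring
    have e2 : -a + 1 * b = b - a := by ring
    rw [e1, e2, Complex.normSq_neg] at hk
    exact hk
  have hdenpos : 0 < Complex.normSq (1 - (starRingEnd ℂ) a * b) :=
    Complex.normSq_pos.2 h1ab
  have hρ1 : ρ < 1 := by
    apply abs_lt_one_of_normSq_lt_one
    rw [hw, Complex.normSq_div, div_lt_one hdenpos]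
    nlinarith [hkd, hnsa, hnsb]
  set β : ℂ := w / (ρ : ℂ) with hβdef
  have hβabs : ‖β‖ = 1 := by
    rw [hβdef, norm_div, Complex.norm_real, Real.norm_eq_abs, abs_of_pos hρ0, ← hρdef, div_self hρ0.ne']
  have hββ : β * (starRingEnd ℂ) β = 1 := by
    rw [Complex.mul_conj, Complex.normSq_eq_norm_sq, hβabs]; norm_num
  have hβne : β ≠ 0 := by
    intro h; rw [h] at hβabs; simp at hβabs
  set γ := (starRingEnd ℂ) a * β with hγdef
  have hγabs : ‖γ‖ = ‖a‖ := by
    rw [hγdef, norm_mul, Complex.norm_conj, hβabs, mul_one]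
  set D : ℂ → ℂ := fun z => 1 + γ * z with hDdef
  have hDne : ∀ z ∈ ball (0:ℂ) 1, D z ≠ 0 := by
    intro z hz h
    have hzb : ‖z‖ < 1 := by simpa using mem_ball_zero_iff.1 hz
    have he : γ * z = -1 := by
      have : D z = 1 + γ * z := rfl
      rw [this] at h; linear_combination h
    have h2 : ‖γ * z‖ = 1 := by rw [he]; simp
    rw [norm_mul, hγabs] at h2
    nlinarith [norm_nonneg z, norm_nonneg a]
  set M : ℂ → ℂ := fun z => (a + β * z) / D z with hMdef
  set m : ℂ → ℂ := fun z => β * (1 - (Complex.normSq a : ℝ)) / D z ^ 2 with hmdef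
  set q : ℂ → ℂ := fun z => -2 * γ / D z with hqdef
  set dq : ℂ → ℂ := fun z => 2 * γ ^ 2 / D z ^ 2 with hdqdef
  have hnsaC : (1:ℂ) - ((Complex.normSq a : ℝ) : ℂ) ≠ 0 := by
    intro h
    have : ((Complex.normSq a : ℝ) : ℂ) = 1 := by linear_combination -h
    have h2 : Complex.normSq a = 1 := by exact_mod_cast this
    linarith
  have hmne : ∀ z ∈ ball (0:ℂ) 1, m z ≠ 0 := by
    intro z hz
    exact div_ne_zero (mul_ne_zero hβne hnsaC) (pow_ne_zero 2 (hDne z hz))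
  have hkey : ∀ z : ℂ, Complex.normSq (D z) - Complex.normSq (a + β * z)
      = (1 - Complex.normSq a) * (1 - Complex.normSq z) := by
    intro z
    have := key a β z hββ
    have e1 : (1:ℂ) + (starRingEnd ℂ) a * β * z = D z := by rw [hDdef]
    rw [e1] at this
    exact this
  have hMap : MapsTo M (ball (0:ℂ) 1) (ball (0:ℂ) 1) := by
    intro z hz
    have hzb : ‖z‖ < 1 := by simpa using mem_ball_zero_iff.1 hz
    have hnz : Complex.normSq z < 1 := by
      rw [Complex.normSq_eq_norm_sq]; nlinarith [norm_nonneg z]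
    have hD2 : 0 < Complex.normSq (D z) := Complex.normSq_pos.2 (hDne z hz)
    rw [mem_ball_zero_iff]
    have hns : Complex.normSq (M z) < 1 := by
      rw [hMdef]; simp only
      rw [Complex.normSq_div, div_lt_one hD2]
      nlinarith [hkey z, hnsa]
    simpa using abs_lt_one_of_normSq_lt_one hns
  have hDd : ∀ z : ℂ, HasDerivAt D γ z := by
    intro z
    exact (((hasDerivAt_id z).const_mul γ).const_add 1).congr_deriv (mul_one γ)
  have hmulconj : ((Complex.normSq a : ℝ) : ℂ) = a * (starRingEnd ℂ) a :=
    (Complex.mul_conj a).symm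
  have hMd : ∀ z ∈ ball (0:ℂ) 1, HasDerivAt M (m z) z := by
    intro z hz
    have h := ((((hasDerivAt_id z).const_mul β).const_add a).div (hDd z) (hDne z hz))
    refine h.congr_deriv (Eq.symm ?_)
    rw [hmdef, hDdef]; simp only [id_eq]
    have hD := hDne z hz
    rw [hDdef] at hD; simp only at hD
    field_simp
    rw [hγdef, hmulconj]
    ring
  have hmd : ∀ z ∈ ball (0:ℂ) 1, HasDerivAt m (q z * m z) z := by
    intro z hz
    have hD2 : HasDerivAt (fun w => D w ^ 2) (2 * D z * γ) z := by
      have := (hDd z).pow 2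
      exact this.congr_deriv (by simp [mul_comm])
    have h := (hasDerivAt_const z (β * ((1:ℂ) - (Complex.normSq a : ℝ)))).div hD2
      (pow_ne_zero 2 (hDne z hz))
    refine h.congr_deriv (Eq.symm ?_)
    rw [hqdef, hmdef]; simp only
    have hD := hDne z hz
    field_simp
    ring
  have hqd : ∀ z ∈ ball (0:ℂ) 1, HasDerivAt q (dq z) z := by
    intro z hz
    have h := (hasDerivAt_const z (-2 * γ)).div (hDd z) (hDne z hz)
    refine h.congr_deriv (Eq.symm ?_)
    rw [hdqdef]; simp only
    have hD := hDne z hz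
    field_simp
    ring
  have hSM : ∀ z ∈ ball (0:ℂ) 1, dq z - q z ^ 2 / 2 = 0 := by
    intro z hz
    rw [hdqdef, hqdef]; simp only
    have hD := hDne z hz
    field_simp
    ring
  have hcomp := schwarzian_comp f M m q dq isOpen_ball hMap hf hf' hMd hmne hmd hqd hSM
  have hgdiff : DifferentiableOn ℂ (f ∘ M) (ball (0:ℂ) 1) :=
    fun z hz => ((hcomp z hz).1).differentiableWithinAt
  have hgder : ∀ z ∈ ball (0:ℂ) 1, deriv (f ∘ M) z ≠ 0 := by
    intro z hz
    rw [(hcomp z hz).2.1]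
    exact mul_ne_zero (hf' _ (hMap hz)) (hmne z hz)
  have habs_m : ∀ z ∈ ball (0:ℂ) 1,
      (1 - ‖z‖ ^ 2) * ‖m z‖ = 1 - ‖M z‖ ^ 2 := by
    intro z hz
    have hD2 : 0 < Complex.normSq (D z) := Complex.normSq_pos.2 (hDne z hz)
    have habs1 : ‖(1:ℂ) - ((Complex.normSq a : ℝ) : ℂ)‖
        = 1 - Complex.normSq a := by
      rw [show (1:ℂ) - ((Complex.normSq a : ℝ) : ℂ)
          = (((1 - Complex.normSq a : ℝ)) : ℂ) by push_cast; ring]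
      rw [Complex.norm_real, Real.norm_eq_abs, abs_of_pos (by linarith)]
    have hm_abs : ‖m z‖ = (1 - Complex.normSq a) / Complex.normSq (D z) := by
      rw [hmdef]; simp only
      rw [norm_div, norm_mul, hβabs, one_mul, norm_pow, habs1, Complex.sq_norm]
    have hM_abs : ‖M z‖ ^ 2 = Complex.normSq (a + β * z) / Complex.normSq (D z) := by
      rw [Complex.sq_norm, hMdef]; simp only
      rw [Complex.normSq_div]
    rw [hm_abs, hM_abs, Complex.sq_norm]
    have hk := hkey z
    calc (1 - Complex.normSq z) * ((1 - Complex.normSq a) / Complex.normSq (D z))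
        = ((1 - Complex.normSq a) * (1 - Complex.normSq z)) / Complex.normSq (D z) := by
          ring
      _ = (Complex.normSq (D z) - Complex.normSq (a + β * z)) / Complex.normSq (D z) := by
          rw [hk]
      _ = 1 - Complex.normSq (a + β * z) / Complex.normSq (D z) := by
          rw [sub_div, div_self hD2.ne']
  have hgS : ∀ z ∈ ball (0:ℂ) 1,
      (1 - ‖z‖ ^ 2) ^ 2 * ‖schwarzian (f ∘ M) z‖ ≤ 2 := by
    intro z hz
    rw [(hcomp z hz).2.2, norm_mul, norm_pow]
    calc (1 - ‖z‖ ^ 2) ^ 2 * (‖schwarzian f (M z)‖ * ‖m z‖ ^ 2)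
        = ((1 - ‖z‖ ^ 2) * ‖m z‖) ^ 2
          * ‖schwarzian f (M z)‖ := by ring
      _ = (1 - ‖M z‖ ^ 2) ^ 2 * ‖schwarzian f (M z)‖ := by
          rw [habs_m z hz]
      _ ≤ 2 := hS _ (hMap hz)
  have hρball : (ρ : ℂ) ∈ ball (0:ℂ) 1 := memb (by rw [abs_of_pos hρ0]; exact hρ1)
  have hM0 : M 0 = a := by
    rw [hMdef, hDdef]; simp
  have hMρ : M ρ = b := by
    have hβρ : β * (ρ:ℂ) = w := by
      rw [hβdef]
      have : (ρ : ℂ) ≠ 0 := by exact_mod_cast hρ0.ne'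
      field_simp
    have hDρ : D ρ ≠ 0 := hDne _ hρball
    rw [hMdef]; simp only
    rw [hDdef] at hDρ ⊢; simp only at hDρ ⊢
    rw [hγdef] at hDρ ⊢
    rw [mul_assoc, hβρ] at hDρ ⊢
    rw [hw] at hDρ ⊢
    field_simp at hDρ ⊢
    rw [div_eq_iff (div_ne_zero_iff.1 hDρ).1]
    ring
  have hgg : (f ∘ M) (ρ : ℝ) = (f ∘ M) 0 := by
    simp only [Function.comp_apply]
    rw [hM0, hMρ]
    exact hfab.symm
  exact core hgdiff hgder hgS hρ0 hρ1 hgg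

end NehariAux

/-- Nehari's univalence criterion: if `f` is holomorphic with nonvanishing derivative
on `𝔻` and `(1-|z|²)² |S_f(z)| ≤ 2` there, then `f` is injective on `𝔻`. -/
theorem nehari_univalence (f : ℂ → ℂ)
    (hf : DifferentiableOn ℂ f (Metric.ball (0:ℂ) 1))
    (hf' : ∀ z ∈ Metric.ball (0:ℂ) 1, deriv f z ≠ 0)
    (hS : ∀ z ∈ Metric.ball (0:ℂ) 1,
      (1 - ‖z‖ ^ 2) ^ 2 * ‖schwarzian f z‖ ≤ 2) :
    Set.InjOn f (Metric.ball (0:ℂ) 1) := by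
  intro a ha b hb hfab
  by_contra hab
  exact NehariAux.mobius_core f hf hf' hS ha hb hab hfab
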